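/- Let (x(t), v(t)) : [0,∞) → ℝ × ℝ be a solution of ẋ = v, v̇ = −v/(1 + x²) with x(0) = x₀ and v(0) = v₀ > 0. If arctan(x₀) + v₀ ≥ π/2 + ε for some ε > 0, then |v(t)| > ε for every t > 0; in particular the relative velocity v(t) does not converge to 0, i.e. the corresponding two-agent Cucker–Smale system does not tend to flocking. -/

import Mathlib

open Filter

/-- For a solution of `ẋ = v`, `v̇ = −v/(1+x²)` with `v₀ > 0`, if
`arctan(x₀) + v₀ ≥ π/2 + ε` for some `ε > 0`, then `|v(t)| > ε` for every `t > 0`;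
in particular `v(t)` does not converge to `0`, i.e. the corresponding two-agent
Cucker–Smale system does not tend to flocking. -/
theorem two_agent_cucker_smale_no_flocking
    (x v : ℝ → ℝ) (x₀ v₀ : ℝ)
    (hx : ∀ t, HasDerivAt x (v t) t)
    (hv : ∀ t, HasDerivAt v (-(v t) / (1 + (x t) ^ 2)) t)
    (hx0 : x 0 = x₀) (hv0 : v 0 = v₀) (hv0pos : 0 < v₀)
    (ε : ℝ) (hε : 0 < ε)
    (hcond : Real.pi / 2 + ε ≤ Real.arctan x₀ + v₀) :
    (∀ t > (0 : ℝ), ε < |v t|) ∧ ¬ Tendsto v atTop (nhds 0) := by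
  set E : ℝ → ℝ := fun t => Real.arctan (x t) + v t with hE
  have hpos : ∀ t, 1 + (x t) ^ 2 ≠ 0 := fun t => by positivity
  have hEderiv : ∀ t, HasDerivAt E 0 t := by
    intro t
    have h1 : HasDerivAt (fun t => Real.arctan (x t)) (v t / (1 + (x t) ^ 2)) t := by
      have := (Real.hasDerivAt_arctan (x t)).comp t (hx t)
      convert this using 1
      · rfl
      · rfl
      · rfl
      · ring
    have := h1.add (hv t)
    convert this using 1
    · rfl
    · rfl
    · rfl
    · ring
  have hconst : ∀ t, E t = E 0 := by
    intro t
    have : ∀ s, deriv E s = 0 := fun s => (hEderiv s).deriv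
    exact is_const_of_deriv_eq_zero (fun s => (hEderiv s).differentiableAt) this t 0
  have hvlt : ∀ t, ε < v t := by
    intro t
    have h1 : E t = Real.arctan (x t) + v t := rfl
    have h2 : E 0 = Real.arctan x₀ + v₀ := by simp [hE, hx0, hv0]
    have h3 : Real.arctan (x t) < Real.pi / 2 := Real.arctan_lt_pi_div_two _
    have := hconst t
    rw [h1, h2] at this
    linarith [hcond]
  constructor
  · intro t _
    exact lt_of_lt_of_le (hvlt t) (le_abs_self _)
  · intro h
    obtain ⟨N, hN⟩ := Metric.tendsto_atTop.mp h ε hε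
    have := hN (max N 1) (le_max_left _ _)
    rw [Real.dist_eq, sub_zero] at this
    exact absurd this (not_lt.mpr (le_of_lt (lt_of_lt_of_le (hvlt _) (le_abs_self _))))
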